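/- Let R be a commutative ring in which 2 is invertible and let θ be a ring automorphism of R with θ(θ(x)) = x for all x. Then, inside GL₃(R), the subgroup generated by the matrices X(r, r·θ(r)/2) for r ∈ R is exactly the set {X(t,u) | t, u ∈ R, t·θ(t) = u + θ(u)}. In particular, every matrix X(t,u) with t·θ(t) = u + θ(u) is a product of matrices of the form X(r, r·θ(r)/2)^{±1} with r ∈ R. -/
import Mathlib

/-- The upper unitriangular matrix `X(t,u)` with rows `(1, θ t, u)`, `(0, 1, t)`, `(0, 0, 1)`. -/
def Xmat {R : Type*} [CommRing R] (θ : R ≃+* R) (t u : R) : Matrix (Fin 3) (Fin 3) R :=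
  !![1, θ t, u; 0, 1, t; 0, 0, 1]

theorem Xmat_mul {R : Type*} [CommRing R] (θ : R ≃+* R) (t u t' u' : R) :
    Xmat θ t u * Xmat θ t' u' = Xmat θ (t + t') (u + u' + θ t * t') := by
  ext i j
  fin_cases i <;> fin_cases j <;>
    simp [Xmat, Matrix.mul_apply, Fin.sum_univ_three, map_add, Matrix.vecHead, Matrix.vecTail] <;> ring

theorem Xmat_one {R : Type*} [CommRing R] (θ : R ≃+* R) : Xmat θ 0 0 = 1 := by
  ext i j
  fin_cases i <;> fin_cases j <;> simp [Xmat, Matrix.one_apply, Matrix.vecHead, Matrix.vecTail]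

/-- The unit `X(t,u)` when `t θ(t) = u + θ(u)`. -/
def Xunit {R : Type*} [CommRing R] (θ : R ≃+* R) (_hθ : ∀ x, θ (θ x) = x)
    (t u : R) (h : t * θ t = u + θ u) : Matrix.GeneralLinearGroup (Fin 3) R where
  val := Xmat θ t u
  inv := Xmat θ (-t) (θ u)
  val_inv := by
    rw [Xmat_mul]
    have : u + θ u + θ t * -t = 0 := by rw [← h]; ring
    rw [this, add_neg_cancel, Xmat_one]
  inv_val := by
    rw [Xmat_mul]
    have e1 : -t + t = 0 := by ring
    have e2 : θ u + u + θ (-t) * t = 0 := by rw [map_neg]; linear_combination -h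
    rw [e1, e2, Xmat_one]

theorem stmt_11 {R : Type*} [CommRing R] (h2 : IsUnit (2 : R))
    (θ : R ≃+* R) (hθ : ∀ x, θ (θ x) = x) :
    ∀ M : Matrix.GeneralLinearGroup (Fin 3) R,
      M ∈ Subgroup.closure {N : Matrix.GeneralLinearGroup (Fin 3) R |
          ∃ r : R, (N : Matrix (Fin 3) (Fin 3) R)
            = Xmat θ r (r * θ r * Ring.inverse (2 : R))} ↔
      ∃ t u : R, t * θ t = u + θ u ∧ (M : Matrix (Fin 3) (Fin 3) R) = Xmat θ t u := by
  set i2 : R := Ring.inverse (2 : R) with hi2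
  have h21 : (2 : R) * i2 = 1 := Ring.mul_inverse_cancel _ h2
  have h1 : (2 : R) * θ i2 = 1 := by
    have := congrArg θ h21
    rwa [map_mul, map_ofNat, map_one] at this
  have hθ2 : θ i2 = i2 := by linear_combination i2 * h1 - θ i2 * h21
  have hgen : ∀ r : R, r * θ r = r * θ r * i2 + θ (r * θ r * i2) := by
    intro r
    rw [map_mul, map_mul, hθ, hθ2]
    linear_combination -(r * θ r) * h21
  let H : Subgroup (Matrix.GeneralLinearGroup (Fin 3) R) :=
    { carrier := {M | ∃ t u : R, t * θ t = u + θ u ∧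
        (M : Matrix (Fin 3) (Fin 3) R) = Xmat θ t u}
      one_mem' := ⟨0, 0, by simp, (Xmat_one θ).symm⟩
      mul_mem' := by
        rintro A B ⟨t, u, h, hA⟩ ⟨t', u', h', hB⟩
        refine ⟨t + t', u + u' + θ t * t', ?_, ?_⟩
        · simp only [map_add, map_mul, hθ]
          linear_combination h + h'
        · show (A : Matrix (Fin 3) (Fin 3) R) * B = _
          rw [hA, hB, Xmat_mul]
      inv_mem' := by
        rintro A ⟨t, u, h, hA⟩
        have : A = Xunit θ hθ t u h := Units.ext hA
        refine ⟨-t, θ u, ?_, ?_⟩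
        · rw [map_neg, hθ]
          linear_combination h
        · rw [this]; rfl }
  have key : Subgroup.closure {N : Matrix.GeneralLinearGroup (Fin 3) R |
      ∃ r : R, (N : Matrix (Fin 3) (Fin 3) R) = Xmat θ r (r * θ r * i2)} = H := by
    apply le_antisymm
    · rw [Subgroup.closure_le]
      rintro N ⟨r, hN⟩
      exact ⟨r, r * θ r * i2, hgen r, hN⟩
    · rintro M ⟨t, u, h, hM⟩
      set G : (r : R) → Matrix.GeneralLinearGroup (Fin 3) R :=
        fun r => Xunit θ hθ r (r * θ r * i2) (hgen r) with hG
      have hGmem : ∀ r, G r ∈ Subgroup.closure {N : Matrix.GeneralLinearGroup (Fin 3) R |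
          ∃ r : R, (N : Matrix (Fin 3) (Fin 3) R) = Xmat θ r (r * θ r * i2)} :=
        fun r => Subgroup.subset_closure ⟨r, rfl⟩
      set c : R := u - t * θ t * i2 with hc
      have hθc : θ c = -c := by
        rw [hc, map_sub, map_mul, map_mul, hθ, hθ2]
        linear_combination -h - t * θ t * h21
      have hMeq : M = G t * G 1 * G c * (G (1 + c))⁻¹ := by
        apply Units.ext
        show (M : Matrix (Fin 3) (Fin 3) R) = _
        have hval : ((G t * G 1 * G c * (G (1 + c))⁻¹ : Matrix.GeneralLinearGroup (Fin 3) R) :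
            Matrix (Fin 3) (Fin 3) R)
            = Xmat θ t (t * θ t * i2) * Xmat θ 1 (1 * θ 1 * i2) * Xmat θ c (c * θ c * i2) *
              Xmat θ (-(1 + c)) (θ ((1 + c) * θ (1 + c) * i2)) := rfl
        rw [hM, hval, Xmat_mul, Xmat_mul, Xmat_mul]
        have e1 : t + 1 + c + -(1 + c) = t := by ring
        have e2 : t * θ t * i2 + 1 * θ 1 * i2 + θ t * 1 + c * θ c * i2 + θ (t + 1) * c
            + θ ((1 + c) * θ (1 + c) * i2) + θ (t + 1 + c) * -(1 + c) = u := by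
          simp only [map_add, map_mul, map_one, map_neg, hθ, hθ2, hθc]
          linear_combination (1 - c * c) * h21 + hc
        rw [e1, e2]
      rw [hMeq]
      exact mul_mem (mul_mem (mul_mem (hGmem t) (hGmem 1)) (hGmem c)) (inv_mem (hGmem (1 + c)))
  intro M
  rw [key]
  exact Iff.rfl
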